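/- For every nonempty class F of sequential experts, every t ∈ {0,…,T}, and all sequences x_{1:t} ∈ X^t, y_{1:t} ∈ Y^t, the value-to-go dominates the dual value-to-go: G(F, x_{1:t}, y_{1:t}) ≥ W(F, x_{1:t}, y_{1:t}). Moreover, if for every continuation x_{t+1:T} ∈ X^{T−t}, y_{t+1:T} ∈ Y^{T−t} one has inf_{f ∈ F} Σ_{s=1}^T ℓ(f(x_{1:s}, y_{1:s-1}), y_s) < ∞, then G(F, x_{1:t}, y_{1:t}) = W(F, x_{1:t}, y_{1:t}). -/

import Mathlib

open scoped BigOperators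

/-- The probability simplex on a finite label set `Y`. -/
abbrev Simplex (Y : Type*) [Fintype Y] :=
  {p : Y → ℝ // (∀ y, 0 ≤ p y) ∧ ∑ y, p y = 1}

/-- A sequential expert: given contexts `x₁,…,x_t` (a list of length `t`) and past labels
`y₁,…,y_{t-1}` (a list of length `t-1`), it predicts a distribution over labels. -/
abbrev Expert (X Y : Type*) [Fintype Y] := List X → List Y → Simplex Y

/-- `-log x` as an extended real, with `-log 0 = ⊤` (and junk value `⊤` for `x < 0`). -/
noncomputable def negLog (x : ℝ) : EReal :=
  if x ≤ 0 then ⊤ else ((-Real.log x : ℝ) : EReal)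

/-- `log x` as an extended real, with `log 0 = ⊥` (and junk value `⊥` for `x < 0`). -/
noncomputable def elog (x : ℝ) : EReal :=
  if x ≤ 0 then ⊥ else ((Real.log x : ℝ) : EReal)

/-- The logarithmic loss `ℓ(p, y) = -log p(y) ∈ [0, ∞]`. -/
noncomputable def logloss {Y : Type*} [Fintype Y] (p : Simplex Y) (y : Y) : EReal :=
  negLog (p.1 y)

/-- Likelihood of expert `f` on a context sequence `xs` and a label sequence `ys`
of the same length: `L(f; y_{1:d} | x_{1:d}) = ∏_{t=1}^d f(x_{1:t}, y_{1:t-1})(y_t)`. -/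
noncomputable def likelihood {X Y : Type*} [Fintype Y] [Inhabited Y]
    (f : Expert X Y) (xs : List X) (ys : List Y) : ℝ :=
  ∏ t ∈ Finset.range ys.length, (f (xs.take (t + 1)) (ys.take t)).1 (ys.getD t default)

/-- Cumulative log loss of expert `f` on `xs`, `ys`:
`Σ_{t=1}^d ℓ(f(x_{1:t}, y_{1:t-1}), y_t)`. -/
noncomputable def cumLoss {X Y : Type*} [Fintype Y] [Inhabited Y]
    (f : Expert X Y) (xs : List X) (ys : List Y) : EReal :=
  ∑ t ∈ Finset.range ys.length, logloss (f (xs.take (t + 1)) (ys.take t)) (ys.getD t default)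

/-- A context tree of depth `T` is modelled as a map `χ : List Y → X` (only its values on
lists of length `< T` matter): `x_t(y) = χ (y_{1:t-1})`.  `treePath χ ys` is the context
sequence `x(y) = (x_1, x_2(y_1), …)` obtained by tracing the tree along the path `ys`. -/
def treePath {X Y : Type*} (χ : List Y → X) (ys : List Y) : List X :=
  (List.range ys.length).map fun t => χ (ys.take t)

/-- The contextual Shtarkov sum of `F` on a context tree `χ` of depth `r`, with prefix
`xs ∈ X^t`, `ys ∈ Y^t`:
`S_T(F, χ | x_{1:t}, y_{1:t}) = Σ_{y ∈ Y^r} sup_{f ∈ F} L(f; (y_{1:t}, y) | (x_{1:t}, χ(y)))`. -/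
noncomputable def shtarkovPrefix {X Y : Type*} [Fintype Y] [Inhabited Y]
    (F : Set (Expert X Y)) (r : ℕ) (χ : List Y → X) (xs : List X) (ys : List Y) : ℝ :=
  ∑ y : Fin r → Y, ⨆ f : F,
    likelihood (f : Expert X Y) (xs ++ treePath χ (List.ofFn y)) (ys ++ List.ofFn y)

/-- The contextual Shtarkov sum `S_T(F | χ) = Σ_{y ∈ Y^T} sup_{f ∈ F} L(f; y | χ(y))`. -/
noncomputable def shtarkov {X Y : Type*} [Fintype Y] [Inhabited Y]
    (F : Set (Expert X Y)) (T : ℕ) (χ : List Y → X) : ℝ :=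
  shtarkovPrefix F T χ [] []

/-- The extensive-form game value with `r` rounds to go, given past contexts `xs`, past
labels `ys`, and accumulated learner loss `acc`:
`sup_{x} inf_{p̂} sup_{y} ⋯ [ acc + Σ ℓ(p̂_s, y_s) − inf_{f ∈ F} Σ_{s=1}^T ℓ(f, y_s) ]`. -/
noncomputable def valToGo {X Y : Type*} [Fintype Y] [Inhabited Y]
    (F : Set (Expert X Y)) : ℕ → List X → List Y → EReal → EReal
  | 0, xs, ys, acc => acc - ⨅ f : F, cumLoss (f : Expert X Y) xs ys
  | r + 1, xs, ys, acc =>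
      ⨆ x : X, ⨅ p : Simplex Y, ⨆ y : Y,
        valToGo F r (xs ++ [x]) (ys ++ [y]) (acc + logloss p y)

/-- The minimax regret
`R_T(F) = sup_{x_1} inf_{p̂_1} sup_{y_1} ⋯ sup_{x_T} inf_{p̂_T} sup_{y_T} R_T(F; p̂, x, y)`. -/
noncomputable def minimaxRegret {X Y : Type*} [Fintype Y] [Inhabited Y]
    (F : Set (Expert X Y)) (T : ℕ) : EReal :=
  valToGo F T [] [] 0

/-- Nested conditional expectation over a probabilistic tree `π`, for `r` remaining rounds:
`E_{y_1 ∼ π([])} E_{y_2 ∼ π(y_{1:1})} ⋯ [g(y_{1:r})]`. -/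
noncomputable def expTree {Y : Type*} [Fintype Y] (π : List Y → Simplex Y)
    (g : List Y → EReal) : ℕ → List Y → EReal
  | 0, pre => g pre
  | r + 1, pre => ∑ y : Y, ((π pre).1 y : EReal) * expTree π g r (pre ++ [y])

/-- The dual (max-min) value-to-go `W(F, x_{1:t}, y_{1:t})`: the supremum over context trees
`χ` and probabilistic trees `π` of depth `r = T - t` of
`E_{y∼π}[ Σ_{s=t+1}^T ℓ(π_s(y), y_s) − inf_{f ∈ F} Σ_{s=1}^T ℓ(f, y_s) ]`. -/
noncomputable def dualValToGo {X Y : Type*} [Fintype Y] [Inhabited Y]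
    (F : Set (Expert X Y)) (r : ℕ) (xs : List X) (ys : List Y) : EReal :=
  ⨆ χ : List Y → X, ⨆ π : List Y → Simplex Y,
    expTree π (fun suf =>
      (∑ s ∈ Finset.range r, logloss (π (suf.take s)) (suf.getD s default)) -
        ⨅ f : F, cumLoss (f : Expert X Y) (xs ++ treePath χ suf) (ys ++ suf)) r []

/-- The dual (max-min) value `V_T(F)`. -/
noncomputable def dualValue {X Y : Type*} [Fintype Y] [Inhabited Y]
    (F : Set (Expert X Y)) (T : ℕ) : EReal :=
  dualValToGo F T [] []


/-! ### Auxiliary development -/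

section Aux

open scoped ENNReal NNReal

set_option linter.unusedSectionVars false
set_option linter.unusedVariables false

variable {X Y : Type*} [Fintype Y] [Inhabited Y]

open Finset in
lemma ereal_coe_sum {ι : Type*} (s : Finset ι) (f : ι → ℝ) :
    ((∑ i ∈ s, f i : ℝ) : EReal) = ∑ i ∈ s, ((f i : ℝ) : EReal) :=
  map_sum (⟨⟨(fun x : ℝ => (x : EReal)), EReal.coe_zero⟩, EReal.coe_add⟩ : ℝ →+ EReal) f s

lemma ereal_neg_iSup {ι : Sort*} (f : ι → EReal) : -(⨆ i, f i) = ⨅ i, - f i := by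
  apply le_antisymm
  · exact le_iInf fun i => EReal.neg_le_neg_iff.2 (le_iSup f i)
  · rw [← neg_neg (⨅ i, -f i), EReal.neg_le_neg_iff]
    refine iSup_le fun i => ?_
    rw [← neg_neg (f i), EReal.neg_le_neg_iff]
    exact iInf_le _ i

lemma ereal_coe_mul_le_coe_mul {c : ℝ} (hc : 0 ≤ c) {a b : EReal} (h : a ≤ b) :
    (c : EReal) * a ≤ (c : EReal) * b := by
  rcases hc.eq_or_lt with h0 | h0
  · rw [← h0]; simp [EReal.zero_mul]
  · induction b with
    | bot => rw [le_bot_iff.1 h]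
    | coe br =>
        induction a with
        | bot => rw [EReal.coe_mul_bot_of_pos h0]; exact bot_le
        | coe ar =>
            rw [← EReal.coe_mul, ← EReal.coe_mul]
            exact EReal.coe_le_coe_iff.2 (mul_le_mul_of_nonneg_left (EReal.coe_le_coe_iff.1 h) hc)
        | top => exact absurd h (by simp)
    | top => rw [EReal.coe_mul_top_of_pos (by exact_mod_cast h0)]; exact le_top

lemma ereal_sum_eq_bot {ι : Type*} (s : Finset ι) (f : ι → EReal) {i : ι} (hi : i ∈ s)
    (h : f i = ⊥) : ∑ j ∈ s, f j = ⊥ := by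
  classical
  rw [← Finset.add_sum_erase s f hi, h, EReal.bot_add]

lemma negLog_eq_neg_log (x : ℝ) : negLog x = - ENNReal.log (ENNReal.ofReal x) := by
  rw [negLog, ENNReal.log_ofReal]
  split_ifs with h
  · simp
  · rw [← EReal.coe_neg]

lemma negLog_nonneg (p : Simplex Y) (y : Y) : 0 ≤ negLog (p.1 y) := by
  rw [negLog]
  split_ifs with h
  · exact le_top
  · have h1 : p.1 y ≤ 1 := by
      have := Finset.single_le_sum (f := p.1) (fun i _ => p.2.1 i) (Finset.mem_univ y)
      rwa [p.2.2] at this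
    have := Real.log_nonpos (le_of_lt (not_le.1 h)) h1
    exact_mod_cast neg_nonneg.2 this

lemma logloss_nonneg (p : Simplex Y) (y : Y) : 0 ≤ logloss p y := negLog_nonneg p y

lemma simplex_le_one (p : Simplex Y) (y : Y) : p.1 y ≤ 1 := by
  have := Finset.single_le_sum (f := p.1) (fun i _ => p.2.1 i) (Finset.mem_univ y)
  rwa [p.2.2] at this

/-- The likelihood as an extended nonneg real. -/
noncomputable def eLik (f : Expert X Y) (xs : List X) (ys : List Y) : ℝ≥0∞ :=
  ∏ t ∈ Finset.range ys.length,
    ENNReal.ofReal ((f (xs.take (t + 1)) (ys.take t)).1 (ys.getD t default))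

lemma eLik_le_one (f : Expert X Y) (xs : List X) (ys : List Y) : eLik f xs ys ≤ 1 :=
  Finset.prod_le_one' fun t _ => ENNReal.ofReal_le_one.2 (simplex_le_one _ _)

lemma sum_negLog (n : ℕ) (g : ℕ → ℝ) :
    ∑ t ∈ Finset.range n, negLog (g t)
      = - ENNReal.log (∏ t ∈ Finset.range n, ENNReal.ofReal (g t)) := by
  induction n with
  | zero => simp
  | succ n ih =>
      have hP : (∏ t ∈ Finset.range n, ENNReal.ofReal (g t)) ≠ ⊤ := by
        refine (ENNReal.prod_lt_top ?_).ne
        exact fun t _ => ENNReal.ofReal_lt_top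
      rw [Finset.sum_range_succ, Finset.prod_range_succ, ENNReal.log_mul_add, ih,
        negLog_eq_neg_log,
        EReal.neg_add
          (Or.inr fun h => ENNReal.ofReal_ne_top (ENNReal.log_eq_top_iff.1 h))
          (Or.inl fun h => hP (ENNReal.log_eq_top_iff.1 h)), sub_eq_add_neg]

lemma cumLoss_eq_neg_log (f : Expert X Y) (xs : List X) (ys : List Y) :
    cumLoss f xs ys = - ENNReal.log (eLik f xs ys) := by
  simpa [cumLoss, logloss, eLik] using
    sum_negLog ys.length (fun t => (f (xs.take (t + 1)) (ys.take t)).1 (ys.getD t default))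

/-- The supremum likelihood over the class. -/
noncomputable def zsup (F : Set (Expert X Y)) (xs : List X) (ys : List Y) : ℝ≥0∞ :=
  ⨆ f : F, eLik (f : Expert X Y) xs ys

lemma zsup_le_one (F : Set (Expert X Y)) (xs : List X) (ys : List Y) : zsup F xs ys ≤ 1 :=
  iSup_le fun f => eLik_le_one _ _ _

lemma iInf_cumLoss_eq (F : Set (Expert X Y)) (xs : List X) (ys : List Y) :
    ⨅ f : F, cumLoss (f : Expert X Y) xs ys = - ENNReal.log (zsup F xs ys) := by
  have h1 : ∀ f : F, cumLoss (f : Expert X Y) xs ys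
      = - ENNReal.log (eLik (f : Expert X Y) xs ys) := fun f => cumLoss_eq_neg_log _ _ _
  calc ⨅ f : F, cumLoss (f : Expert X Y) xs ys
      = ⨅ f : F, - ENNReal.log (eLik (f : Expert X Y) xs ys) := by
        exact iInf_congr h1
    _ = - ⨆ f : F, ENNReal.log (eLik (f : Expert X Y) xs ys) := (ereal_neg_iSup _).symm
    _ = - ENNReal.log (zsup F xs ys) := by
        rw [zsup, ← ENNReal.logOrderIso_apply, OrderIso.map_iSup]
        simp

/-! ### treePath lemmas -/

@[simp] lemma treePath_nil (χ : List Y → X) : treePath (X := X) χ ([] : List Y) = [] := rfl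

@[simp] lemma treePath_length (χ : List Y → X) (l : List Y) :
    (treePath χ l).length = l.length := by simp [treePath]

lemma treePath_cons (χ : List Y → X) (a : Y) (l : List Y) :
    treePath χ (a :: l) = χ [] :: treePath (fun m => χ (a :: m)) l := by
  simp [treePath, List.range_succ_eq_map, List.map_map, Function.comp_def, List.take_succ_cons]

lemma treePath_append (χ : List Y → X) (p l : List Y) :
    treePath χ (p ++ l) = treePath χ p ++ treePath (fun m => χ (p ++ m)) l := by
  induction p generalizing χ with
  | nil => rfl
  | cons a p ih =>
      rw [List.cons_append, treePath_cons, treePath_cons, ih]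
      simp [List.cons_append]

lemma treePath_concat (χ : List Y → X) (p : List Y) (y : Y) :
    treePath χ (p ++ [y]) = treePath χ p ++ [χ p] := by
  rw [treePath_append]
  congr 1
  simp [treePath, List.range_succ]

/-! ### The Shtarkov sum in `ℝ≥0∞` -/

/-- Contextual Shtarkov sum valued in `ℝ≥0∞`. -/
noncomputable def shS (F : Set (Expert X Y)) (r : ℕ) (χ : List Y → X)
    (xs : List X) (ys : List Y) : ℝ≥0∞ :=
  ∑ y : Fin r → Y, zsup F (xs ++ treePath χ (List.ofFn y)) (ys ++ List.ofFn y)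

lemma shS_zero (F : Set (Expert X Y)) (χ : List Y → X) (xs : List X) (ys : List Y) :
    shS F 0 χ xs ys = zsup F xs ys := by
  rw [shS, Fintype.sum_unique]
  simp

lemma shS_le_card (F : Set (Expert X Y)) (r : ℕ) (χ : List Y → X) (xs : List X) (ys : List Y) :
    shS F r χ xs ys ≤ (Fintype.card (Fin r → Y) : ℝ≥0∞) := by
  rw [shS]
  calc ∑ y : Fin r → Y, zsup F (xs ++ treePath χ (List.ofFn y)) (ys ++ List.ofFn y)
      ≤ ∑ _y : Fin r → Y, (1 : ℝ≥0∞) := Finset.sum_le_sum fun y _ => zsup_le_one _ _ _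
    _ = (Fintype.card (Fin r → Y) : ℝ≥0∞) := by simp

lemma shS_ne_top (F : Set (Expert X Y)) (r : ℕ) (χ : List Y → X) (xs : List X) (ys : List Y) :
    shS F r χ xs ys ≠ ⊤ :=
  ((shS_le_card F r χ xs ys).trans_lt (ENNReal.natCast_lt_top _)).ne

lemma shS_succ (F : Set (Expert X Y)) (r : ℕ) (χ : List Y → X) (xs : List X) (ys : List Y) :
    shS F (r + 1) χ xs ys
      = ∑ a : Y, shS F r (fun l => χ (a :: l)) (xs ++ [χ []]) (ys ++ [a]) := by
  rw [shS, ← Equiv.sum_comp (Fin.consEquiv (fun _ : Fin (r + 1) => Y)), Fintype.sum_prod_type]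
  refine Finset.sum_congr rfl fun a _ => ?_
  rw [shS]
  refine Finset.sum_congr rfl fun yv _ => ?_
  have hofn : List.ofFn ((Fin.consEquiv (fun _ : Fin (r + 1) => Y)) (a, yv)) = a :: List.ofFn yv := by
    rw [List.ofFn_succ]
    simp [Fin.consEquiv]
  rw [hofn, treePath_cons]
  simp [List.append_assoc]

lemma single_path_le_shS (F : Set (Expert X Y)) (χ : List Y → X) (xs : List X) (ys : List Y)
    (l : List Y) :
    zsup F (xs ++ treePath χ l) (ys ++ l) ≤ shS F l.length χ xs ys := by
  have hl : l = List.ofFn (fun i : Fin l.length => l.get i) := (List.ofFn_get l).symm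
  calc zsup F (xs ++ treePath χ l) (ys ++ l)
      = zsup F (xs ++ treePath χ (List.ofFn (fun i : Fin l.length => l.get i)))
          (ys ++ List.ofFn (fun i : Fin l.length => l.get i)) := by rw [← hl]
    _ ≤ shS F l.length χ xs ys := by
        rw [shS]
        exact Finset.single_le_sum
          (f := fun z : Fin l.length → Y =>
            zsup F (xs ++ treePath χ (List.ofFn z)) (ys ++ List.ofFn z))
          (fun z _ => zero_le) (Finset.mem_univ (fun i : Fin l.length => l.get i))

/-! ### Unfolding lemmas -/

lemma valToGo_zero' (F : Set (Expert X Y)) (xs : List X) (ys : List Y) (acc : EReal) :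
    valToGo F 0 xs ys acc = acc + ENNReal.log (zsup F xs ys) := by
  show acc - ⨅ f : F, cumLoss (f : Expert X Y) xs ys = _
  rw [iInf_cumLoss_eq, sub_eq_add_neg, neg_neg]

lemma valToGo_succ' (F : Set (Expert X Y)) (r : ℕ) (xs : List X) (ys : List Y) (acc : EReal) :
    valToGo F (r + 1) xs ys acc
      = ⨆ x : X, ⨅ p : Simplex Y, ⨆ y : Y,
          valToGo F r (xs ++ [x]) (ys ++ [y]) (acc + logloss p y) := rfl

lemma expTree_succ' (π : List Y → Simplex Y) (g : List Y → EReal) (r : ℕ) (pre : List Y) :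
    expTree π g (r + 1) pre = ∑ y : Y, ((π pre).1 y : EReal) * expTree π g r (pre ++ [y]) := rfl

/-! ### Pigeonhole for the adversary's lower bound -/

lemma exists_good_label (p : Simplex Y) (A : Y → ℝ≥0∞) (hfin : ∀ y, A y ≠ ⊤)
    (hpos : ∑ y, A y ≠ 0) :
    ∃ y, A y ≠ 0 ∧ ENNReal.ofReal (p.1 y) * ∑ z, A z ≤ A y := by
  classical
  by_contra hcon
  push_neg at hcon
  have hS : (∑ z, A z) ≠ ⊤ := by
    refine (ENNReal.sum_lt_top.2 fun z _ => ?_).ne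
    exact lt_top_iff_ne_top.2 (hfin z)
  set Sr := (∑ z, A z).toReal with hSrdef
  have hSr' : ∑ z, (A z).toReal = Sr := (ENNReal.toReal_sum fun z _ => hfin z).symm
  obtain ⟨y0, _, hy0⟩ := Finset.exists_ne_zero_of_sum_ne_zero hpos
  have hwk : ∀ y, (A y).toReal ≤ p.1 y * Sr := by
    intro y
    by_cases hy : A y = 0
    · rw [hy]
      simpa using mul_nonneg (p.2.1 y) ENNReal.toReal_nonneg
    · have hlt : A y < ENNReal.ofReal (p.1 y) * ∑ z, A z := hcon y hy
      have hfin2 : ENNReal.ofReal (p.1 y) * ∑ z, A z ≠ ⊤ :=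
        ENNReal.mul_ne_top ENNReal.ofReal_ne_top hS
      have := (ENNReal.toReal_lt_toReal (hfin y) hfin2).2 hlt
      rw [ENNReal.toReal_mul, ENNReal.toReal_ofReal (p.2.1 y)] at this
      exact this.le
  have hstrict : (A y0).toReal < p.1 y0 * Sr := by
    have hlt : A y0 < ENNReal.ofReal (p.1 y0) * ∑ z, A z := hcon y0 hy0
    have hfin2 : ENNReal.ofReal (p.1 y0) * ∑ z, A z ≠ ⊤ :=
      ENNReal.mul_ne_top ENNReal.ofReal_ne_top hS
    have := (ENNReal.toReal_lt_toReal (hfin y0) hfin2).2 hlt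
    rwa [ENNReal.toReal_mul, ENNReal.toReal_ofReal (p.2.1 y0)] at this
  have hsum := Finset.sum_lt_sum (fun y (_ : y ∈ Finset.univ) => hwk y)
    ⟨y0, Finset.mem_univ _, hstrict⟩
  rw [hSr', ← Finset.sum_mul, p.2.2, one_mul] at hsum
  exact lt_irrefl _ hsum

/-! ### The learner guarantee side: `Φ ≤ G` (adversary lower bound) -/

lemma log_shS_le_valToGo (F : Set (Expert X Y)) :
    ∀ (r : ℕ) (xs : List X) (ys : List Y) (acc : EReal) (χ : List Y → X),
      acc + ENNReal.log (shS F r χ xs ys) ≤ valToGo F r xs ys acc := by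
  intro r
  induction r with
  | zero =>
      intro xs ys acc χ
      rw [shS_zero, valToGo_zero']
  | succ r ih =>
      intro xs ys acc χ
      rw [valToGo_succ']
      refine le_trans ?_ (le_iSup _ (χ []))
      refine le_iInf fun p => ?_
      by_cases h0 : shS F (r + 1) χ xs ys = 0
      · rw [h0, ENNReal.log_zero, EReal.add_bot]
        exact bot_le
      · set A : Y → ℝ≥0∞ :=
          fun y => shS F r (fun l => χ (y :: l)) (xs ++ [χ []]) (ys ++ [y]) with hA
        have hsum : ∑ y, A y = shS F (r + 1) χ xs ys := (shS_succ F r χ xs ys).symm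
        obtain ⟨y, hy0, hyle⟩ := exists_good_label p A
          (fun y => shS_ne_top _ _ _ _ _) (by rw [hsum]; exact h0)
        refine le_trans ?_ (le_iSup _ y)
        refine le_trans ?_ (ih (xs ++ [χ []]) (ys ++ [y]) (acc + logloss p y) (fun l => χ (y :: l)))
        rw [add_assoc]
        refine add_le_add le_rfl ?_
        rw [← hsum]
        show ENNReal.log (∑ y, A y) ≤ logloss p y + ENNReal.log (A y)
        rw [logloss, negLog_eq_neg_log]
        set q := ENNReal.ofReal (p.1 y) with hq
        by_cases hq0 : q = 0
        · rw [hq0, ENNReal.log_zero, EReal.neg_bot,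
            EReal.top_add_of_ne_bot (by simp [hy0])]
          exact le_top
        · have hq' : q ≠ ⊤ := ENNReal.ofReal_ne_top
          have hlog : ENNReal.log q + ENNReal.log (∑ z, A z) ≤ ENNReal.log (A y) := by
            rw [← ENNReal.log_mul_add]
            exact ENNReal.log_monotone hyle
          have hcoe : ∃ c : ℝ, ENNReal.log q = (c : EReal) :=
            ⟨Real.log q.toReal, ENNReal.log_pos_real hq0 hq'⟩
          obtain ⟨c, hc⟩ := hcoe
          rw [hc] at hlog
          calc ENNReal.log (∑ y, A y)
              = -(c : EReal) + ((c : EReal) + ENNReal.log (∑ y, A y)) := by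
                rw [← add_assoc, ← EReal.coe_neg, ← EReal.coe_add, neg_add_cancel,
                  EReal.coe_zero, zero_add]
            _ ≤ -(c : EReal) + ENNReal.log (A y) := add_le_add le_rfl hlog
            _ = -ENNReal.log q + ENNReal.log (A y) := by rw [hc]

/-! ### Sum–sup exchange -/

lemma finset_sum_iSup_le {ι C : Type*} [Nonempty C] (s : Finset ι) (f : ι → C → ℝ≥0∞) :
    ∑ i ∈ s, ⨆ c, f i c ≤ ⨆ g : ι → C, ∑ i ∈ s, f i (g i) := by
  classical
  induction s using Finset.induction_on with
  | empty => simp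
  | @insert a s ha ih =>
      rw [Finset.sum_insert ha]
      calc (⨆ c, f a c) + ∑ i ∈ s, ⨆ c, f i c
          ≤ (⨆ c, f a c) + ⨆ g : ι → C, ∑ i ∈ s, f i (g i) := add_le_add le_rfl ih
        _ = ⨆ c, ⨆ g : ι → C, (f a c + ∑ i ∈ s, f i (g i)) := by
            rw [ENNReal.iSup_add]
            exact iSup_congr fun c => ENNReal.add_iSup _
        _ ≤ ⨆ g : ι → C, ∑ i ∈ insert a s, f i (g i) := by
            refine iSup_le fun c => iSup_le fun g => ?_
            refine le_iSup_of_le (Function.update g a c) ?_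
            rw [Finset.sum_insert ha, Function.update_self]
            refine add_le_add le_rfl (le_of_eq ?_)
            exact Finset.sum_congr rfl fun i hi => by
              rw [Function.update_of_ne (ne_of_mem_of_not_mem hi ha)]

/-! ### The learner's NML strategy: `G ≤ Φ` -/

lemma valToGo_le_log [Nonempty X] (F : Set (Expert X Y)) :
    ∀ (r : ℕ) (xs : List X) (ys : List Y),
      (∀ (xs' : List X) (ys' : List Y), xs'.length = r → ys'.length = r →
        zsup F (xs ++ xs') (ys ++ ys') ≠ 0) →
      ∀ acc : EReal,
        valToGo F r xs ys acc ≤ acc + ENNReal.log (⨆ χ : List Y → X, shS F r χ xs ys) := by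
  intro r
  induction r with
  | zero =>
      intro xs ys hP acc
      rw [valToGo_zero']
      have h : ⨆ χ : List Y → X, shS F 0 χ xs ys = zsup F xs ys := by
        simp [shS_zero]
      rw [h]
  | succ r ih =>
      intro xs ys hP acc
      rw [valToGo_succ']
      refine iSup_le fun x => ?_
      set A : Y → ℝ≥0∞ := fun y => ⨆ χ : List Y → X, shS F r χ (xs ++ [x]) (ys ++ [y]) with hA
      have hAne : ∀ y, A y ≠ ⊤ := fun y =>
        ((iSup_le fun χ => shS_le_card F r χ _ _).trans_lt (ENNReal.natCast_lt_top _)).ne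
      have hApos : ∀ y, A y ≠ 0 := by
        intro y h0
        set L : List Y := List.replicate r default with hL
        have hlen : L.length = r := List.length_replicate
        have h1 : zsup F ((xs ++ [x]) ++ treePath (fun _ => x) L) ((ys ++ [y]) ++ L)
            ≤ shS F r (fun _ => x) (xs ++ [x]) (ys ++ [y]) := by
          have := single_path_le_shS F (fun _ => x) (xs ++ [x]) (ys ++ [y]) L
          rwa [hlen] at this
        have h2 : shS F r (fun _ => x) (xs ++ [x]) (ys ++ [y]) ≤ A y :=
          le_iSup (fun χ : List Y → X => shS F r χ (xs ++ [x]) (ys ++ [y])) (fun _ => x)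
        have h3 := hP (x :: treePath (fun _ : List Y => x) L) (y :: L)
          (by simp [hlen]) (by simp [hlen])
        refine h3 ?_
        rw [show xs ++ x :: treePath (fun _ : List Y => x) L
            = (xs ++ [x]) ++ treePath (fun _ : List Y => x) L by simp,
          show ys ++ y :: L = (ys ++ [y]) ++ L by simp]
        exact le_antisymm (le_trans h1 (h2.trans_eq h0)) zero_le
      set a : Y → ℝ := fun y => (A y).toReal with ha
      have hapos : ∀ y, 0 < a y := fun y => ENNReal.toReal_pos (hApos y) (hAne y)
      set Sa : ℝ := ∑ y, a y with hSa
      have hSapos : 0 < Sa := Finset.sum_pos (fun y _ => hapos y) Finset.univ_nonempty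
      set pstar : Simplex Y := ⟨fun y => a y / Sa,
        fun y => div_nonneg (hapos y).le hSapos.le,
        by rw [← Finset.sum_div, div_self hSapos.ne']⟩ with hp
      refine le_trans (iInf_le _ pstar) ?_
      refine iSup_le fun y => ?_
      have hchild : ∀ (xs'' : List X) (ys'' : List Y), xs''.length = r → ys''.length = r →
          zsup F ((xs ++ [x]) ++ xs'') ((ys ++ [y]) ++ ys'') ≠ 0 := by
        intro xs'' ys'' h1 h2
        have := hP (x :: xs'') (y :: ys'') (by simp [h1]) (by simp [h2])
        simpa [List.append_assoc] using this
      refine le_trans (ih (xs ++ [x]) (ys ++ [y]) hchild (acc + logloss pstar y)) ?_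
      have hAy : ENNReal.log (A y) = ((Real.log (a y) : ℝ) : EReal) :=
        ENNReal.log_pos_real (hApos y) (hAne y)
      have hl : logloss pstar y = ((Real.log Sa - Real.log (a y) : ℝ) : EReal) := by
        show negLog (a y / Sa) = _
        rw [negLog, if_neg (not_le.2 (div_pos (hapos y) hSapos))]
        congr 1
        rw [Real.log_div (hapos y).ne' hSapos.ne']
        ring
      rw [hl, hAy, add_assoc, ← EReal.coe_add,
        show Real.log Sa - Real.log (a y) + Real.log (a y) = Real.log Sa by ring]
      refine add_le_add le_rfl ?_
      have h1 : ((Real.log Sa : ℝ) : EReal) = ENNReal.log (ENNReal.ofReal Sa) :=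
        (ENNReal.log_ofReal_of_pos hSapos).symm
      have h2 : ENNReal.ofReal Sa = ∑ y, A y := by
        rw [hSa, ENNReal.ofReal_sum_of_nonneg (fun _ _ => ENNReal.toReal_nonneg)]
        exact Finset.sum_congr rfl fun z _ => ENNReal.ofReal_toReal (hAne z)
      rw [h1, h2]
      have h2' : (∑ y, A y) = ∑ y, A y := rfl
      apply ENNReal.log_monotone
      refine le_trans (le_of_eq ?_) (le_trans (finset_sum_iSup_le Finset.univ
        (fun y χ => shS F r χ (xs ++ [x]) (ys ++ [y]))) ?_)
      · rfl
      refine iSup_le fun g => ?_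
      refine le_iSup_of_le (fun l => List.casesOn l x (fun y m => g y m)) ?_
      rw [shS_succ]

/-! ### Gibbs' inequality -/

lemma gibbs_real (w sv : Y → ℝ) (hw0 : ∀ y, 0 ≤ w y)
    (hw1 : ∑ y, w y = 1) (hsv : ∀ y, 0 < w y → 0 < sv y) (St : ℝ)
    (hle : ∑ y ∈ Finset.univ.filter (fun y => 0 < w y), sv y ≤ St) (c : ℝ) :
    ∑ y ∈ Finset.univ.filter (fun y => 0 < w y),
        w y * ((c + -Real.log (w y)) + Real.log (sv y)) ≤ c + Real.log St := by
  classical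
  set s := Finset.univ.filter (fun y : Y => 0 < w y) with hs
  have hmem : ∀ y, y ∈ s ↔ 0 < w y := fun y => by simp [hs]
  have hsne : s.Nonempty := by
    by_contra hemp
    rw [Finset.not_nonempty_iff_eq_empty] at hemp
    have hz : ∑ y, w y = 0 := by
      refine Finset.sum_eq_zero fun y _ => ?_
      by_contra hy
      have h1 : 0 < w y := (hw0 y).lt_of_ne (Ne.symm hy)
      have h2 : y ∈ s := (hmem y).2 h1
      rw [hemp] at h2
      exact absurd h2 (Finset.notMem_empty y)
    rw [hw1] at hz; exact one_ne_zero hz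
  have hws : ∑ y ∈ s, w y = 1 := by
    rw [← hw1]
    refine Finset.sum_subset (Finset.subset_univ s) fun y _ hy => ?_
    exact le_antisymm (not_lt.1 fun h => hy ((hmem y).2 h)) (hw0 y)
  have hSt : 0 < St :=
    lt_of_lt_of_le (Finset.sum_pos (fun y hy => hsv y ((hmem y).1 hy)) hsne) hle
  have hzpos : ∀ y ∈ s, 0 < sv y / w y := fun y hy =>
    div_pos (hsv y ((hmem y).1 hy)) ((hmem y).1 hy)
  have amgm := Real.geom_mean_le_arith_mean_weighted s w (fun y => sv y / w y)
    (fun y _ => hw0 y) hws (fun y hy => (hzpos y hy).le)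
  have hsum_eq : ∑ y ∈ s, w y * (sv y / w y) = ∑ y ∈ s, sv y :=
    Finset.sum_congr rfl fun y hy => by
      rw [mul_comm, div_mul_cancel₀ _ ((hmem y).1 hy).ne']
  have hprodpos : 0 < ∏ y ∈ s, (sv y / w y) ^ w y :=
    Finset.prod_pos fun y hy => Real.rpow_pos_of_pos (hzpos y hy) _
  have hst' : ∑ y ∈ s, w y * (sv y / w y) ≤ St := by rw [hsum_eq]; exact hle
  have hlog := Real.log_le_log hprodpos (le_trans amgm hst')
  rw [Real.log_prod (fun y hy => (Real.rpow_pos_of_pos (hzpos y hy) _).ne')] at hlog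
  have hlog' : ∑ y ∈ s, w y * (Real.log (sv y) - Real.log (w y)) ≤ Real.log St := by
    refine le_trans (le_of_eq ?_) hlog
    refine Finset.sum_congr rfl fun y hy => ?_
    rw [Real.log_rpow (hzpos y hy),
      Real.log_div (hsv y ((hmem y).1 hy)).ne' ((hmem y).1 hy).ne']
  calc ∑ y ∈ s, w y * ((c + -Real.log (w y)) + Real.log (sv y))
      = ∑ y ∈ s, (w y * c + w y * (Real.log (sv y) - Real.log (w y))) :=
        Finset.sum_congr rfl fun y _ => by ring
    _ = (∑ y ∈ s, w y) * c + ∑ y ∈ s, w y * (Real.log (sv y) - Real.log (w y)) := by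
        rw [Finset.sum_add_distrib, Finset.sum_mul]
    _ ≤ 1 * c + Real.log St := by rw [hws]; exact add_le_add le_rfl hlog'
    _ = c + Real.log St := by ring

lemma exp_gibbs (w : Simplex Y) (S : Y → ℝ≥0∞) (hfin : ∀ y, S y ≠ ⊤) (C : EReal)
    (hC : 0 ≤ C) :
    ∑ y : Y, (w.1 y : EReal) * ((C + negLog (w.1 y)) + ENNReal.log (S y))
      ≤ C + ENNReal.log (∑ y, S y) := by
  classical
  have hCbot : C ≠ ⊥ := fun h => by
    rw [h] at hC
    exact absurd hC (not_le.2 EReal.bot_lt_zero)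
  obtain ⟨y1, hy1⟩ : ∃ y, 0 < w.1 y := by
    by_contra hno
    push_neg at hno
    have hz : ∑ y, w.1 y = 0 := Finset.sum_eq_zero fun y _ => le_antisymm (hno y) (w.2.1 y)
    rw [w.2.2] at hz; exact one_ne_zero hz
  by_cases hleak : ∃ y0, 0 < w.1 y0 ∧ S y0 = 0
  · obtain ⟨y0, hw0, hS0⟩ := hleak
    have hterm : (w.1 y0 : EReal) * ((C + negLog (w.1 y0)) + ENNReal.log (S y0)) = ⊥ := by
      rw [hS0, ENNReal.log_zero, EReal.add_bot, EReal.coe_mul_bot_of_pos hw0]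
    rw [ereal_sum_eq_bot Finset.univ _ (Finset.mem_univ y0) hterm]
    exact bot_le
  · push_neg at hleak
    have hStot : (∑ y, S y) ≠ 0 := by
      intro h0
      refine hleak y1 hy1 ?_
      exact le_antisymm
        (le_trans (Finset.single_le_sum (fun y _ => zero_le) (Finset.mem_univ y1)) h0.le)
        zero_le
    by_cases hCtop : C = ⊤
    · rw [hCtop, EReal.top_add_of_ne_bot (by simp [hStot])]
      exact le_top
    · obtain ⟨c, hc⟩ : ∃ c : ℝ, C = (c : EReal) := by
        induction C with
        | bot => exact absurd rfl hCbot
        | coe c => exact ⟨c, rfl⟩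
        | top => exact absurd rfl hCtop
      have hterm : ∀ y : Y, (w.1 y : EReal) * ((C + negLog (w.1 y)) + ENNReal.log (S y))
          = (((if 0 < w.1 y then
                w.1 y * ((c + -Real.log (w.1 y)) + Real.log ((S y).toReal)) else 0) : ℝ)
              : EReal) := by
        intro y
        by_cases hwy : 0 < w.1 y
        · have hSy := hleak y hwy
          rw [if_pos hwy, negLog, if_neg (not_le.2 hwy),
            ENNReal.log_pos_real hSy (hfin y), hc,
            ← EReal.coe_add, ← EReal.coe_add, ← EReal.coe_mul]
        · have hwy0 : w.1 y = 0 := le_antisymm (not_lt.1 hwy) (w.2.1 y)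
          rw [if_neg hwy, hwy0, EReal.coe_zero, EReal.zero_mul]
      rw [Finset.sum_congr rfl (fun y _ => hterm y), ← ereal_coe_sum]
      have hSfin : (∑ y, S y) ≠ ⊤ :=
        (ENNReal.sum_lt_top.2 fun y _ => lt_top_iff_ne_top.2 (hfin y)).ne
      rw [hc, ENNReal.log_pos_real hStot hSfin, ← EReal.coe_add, EReal.coe_le_coe_iff,
        ← Finset.sum_filter]
      refine gibbs_real w.1 (fun y => (S y).toReal) w.2.1 w.2.2
        (fun y hy => ENNReal.toReal_pos (hleak y hy) (hfin y)) _ ?_ c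
      calc ∑ y ∈ Finset.univ.filter (fun y => 0 < w.1 y), (S y).toReal
          ≤ ∑ y, (S y).toReal :=
            Finset.sum_le_sum_of_subset_of_nonneg (Finset.filter_subset _ _)
              (fun _ _ _ => ENNReal.toReal_nonneg)
        _ = (∑ y, S y).toReal := (ENNReal.toReal_sum fun y _ => hfin y).symm

/-! ### Loss-sum decomposition along a path -/

lemma loss_sum_concat (π : List Y → Simplex Y) (pre : List Y) (y : Y) :
    ∑ s ∈ Finset.range (pre ++ [y]).length,
        logloss (π ((pre ++ [y]).take s)) ((pre ++ [y]).getD s default)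
      = (∑ s ∈ Finset.range pre.length, logloss (π (pre.take s)) (pre.getD s default))
        + logloss (π pre) y := by
  rw [List.length_append, List.length_singleton, Finset.sum_range_succ]
  congr 1
  · refine Finset.sum_congr rfl fun s hs => ?_
    have hs' := Finset.mem_range.1 hs
    rw [List.take_append_of_le_length hs'.le, List.getD_append _ _ _ _ hs']
  · rw [List.take_append_of_le_length le_rfl, List.take_length,
      List.getD_append_right _ _ _ _ le_rfl, Nat.sub_self]
    rfl

lemma loss_sum_nonneg (π : List Y → Simplex Y) (pre : List Y) :
    0 ≤ ∑ s ∈ Finset.range pre.length, logloss (π (pre.take s)) (pre.getD s default) :=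
  Finset.sum_nonneg fun s _ => logloss_nonneg _ _

/-! ### The dual upper bound: `W ≤ Φ` -/

lemma expTree_le_log (F : Set (Expert X Y)) (r : ℕ) (xs : List X) (ys : List Y)
    (χ : List Y → X) (π : List Y → Simplex Y) :
    ∀ (k : ℕ) (pre : List Y), pre.length + k = r →
      expTree π (fun suf =>
        (∑ s ∈ Finset.range r, logloss (π (suf.take s)) (suf.getD s default)) -
          ⨅ f : F, cumLoss (f : Expert X Y) (xs ++ treePath χ suf) (ys ++ suf)) k pre
      ≤ (∑ s ∈ Finset.range pre.length, logloss (π (pre.take s)) (pre.getD s default))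
        + ENNReal.log (shS F k (fun l => χ (pre ++ l)) (xs ++ treePath χ pre) (ys ++ pre)) := by
  set g : List Y → EReal := fun suf =>
    (∑ s ∈ Finset.range r, logloss (π (suf.take s)) (suf.getD s default)) -
      ⨅ f : F, cumLoss (f : Expert X Y) (xs ++ treePath χ suf) (ys ++ suf) with hg
  intro k
  induction k with
  | zero =>
      intro pre hlen
      rw [Nat.add_zero] at hlen
      show g pre ≤ _
      rw [hg]
      show (∑ s ∈ Finset.range r, logloss (π (pre.take s)) (pre.getD s default)) -
          ⨅ f : F, cumLoss (f : Expert X Y) (xs ++ treePath χ pre) (ys ++ pre) ≤ _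
      rw [iInf_cumLoss_eq, sub_eq_add_neg, neg_neg, shS_zero, hlen]
  | succ k ihk =>
      intro pre hlen
      rw [expTree_succ']
      set C : EReal :=
        ∑ s ∈ Finset.range pre.length, logloss (π (pre.take s)) (pre.getD s default) with hCdef
      set Sy : Y → ℝ≥0∞ := fun y => shS F k (fun l => χ ((pre ++ [y]) ++ l))
        (xs ++ treePath χ (pre ++ [y])) (ys ++ (pre ++ [y])) with hSydef
      have hstep : ∀ y : Y, expTree π g k (pre ++ [y])
          ≤ (C + logloss (π pre) y) + ENNReal.log (Sy y) := by
        intro y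
        have hl2 : (pre ++ [y]).length + k = r := by
          rw [List.length_append, List.length_singleton]; omega
        have h := ihk (pre ++ [y]) hl2
        rw [loss_sum_concat] at h
        exact h
      calc ∑ y : Y, ((π pre).1 y : EReal) * expTree π g k (pre ++ [y])
          ≤ ∑ y : Y, ((π pre).1 y : EReal) * ((C + logloss (π pre) y) + ENNReal.log (Sy y)) :=
            Finset.sum_le_sum fun y _ => ereal_coe_mul_le_coe_mul ((π pre).2.1 y) (hstep y)
        _ ≤ C + ENNReal.log (∑ y, Sy y) :=
            exp_gibbs (π pre) Sy (fun y => shS_ne_top _ _ _ _ _) C (loss_sum_nonneg π pre)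
        _ = C + ENNReal.log (shS F (k + 1) (fun l => χ (pre ++ l))
              (xs ++ treePath χ pre) (ys ++ pre)) := by
            congr 1
            congr 1
            rw [shS_succ]
            refine Finset.sum_congr rfl fun y _ => ?_
            simp [hSydef, treePath_concat, List.append_assoc]

lemma dual_le_iSup_log (F : Set (Expert X Y)) (r : ℕ) (xs : List X) (ys : List Y) :
    dualValToGo F r xs ys ≤ ⨆ χ : List Y → X, ENNReal.log (shS F r χ xs ys) := by
  rw [dualValToGo]
  refine iSup_le fun χ => iSup_le fun π => ?_
  have h := expTree_le_log F r xs ys χ π r [] (by simp)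
  refine le_trans h ?_
  simp only [List.length_nil, Finset.range_zero, Finset.sum_empty, zero_add,
    List.nil_append, treePath_nil, List.append_nil]
  exact le_iSup (fun χ' : List Y → X => ENNReal.log (shS F r χ' xs ys)) χ

/-! ### The adversary's NML tree: `Φ ≤ W` -/

/-- The uniform distribution on `Y`. -/
noncomputable def unifSimplex (Y : Type*) [Fintype Y] [Inhabited Y] : Simplex Y :=
  ⟨fun _ => (Fintype.card Y : ℝ)⁻¹, fun _ => by positivity,
    by
      rw [Finset.sum_const, nsmul_eq_mul, Finset.card_univ, mul_inv_cancel₀]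
      exact Nat.cast_ne_zero.2 Fintype.card_ne_zero⟩

lemma log_le_dual (F : Set (Expert X Y)) (r : ℕ) (xs : List X) (ys : List Y)
    (hP : ∀ (xs' : List X) (ys' : List Y), xs'.length = r → ys'.length = r →
      zsup F (xs ++ xs') (ys ++ ys') ≠ 0)
    (χ : List Y → X) :
    ENNReal.log (shS F r χ xs ys) ≤ dualValToGo F r xs ys := by
  classical
  set N : List Y → ℝ≥0∞ := fun pre =>
    shS F (r - pre.length) (fun l => χ (pre ++ l)) (xs ++ treePath χ pre) (ys ++ pre) with hN
  have hNfin : ∀ pre, N pre ≠ ⊤ := fun pre => shS_ne_top _ _ _ _ _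
  have hNpos : ∀ pre : List Y, pre.length ≤ r → N pre ≠ 0 := by
    intro pre hpre h0
    set L : List Y := List.replicate (r - pre.length) default with hL
    have hLlen : L.length = r - pre.length := List.length_replicate
    have h1 : zsup F ((xs ++ treePath χ pre) ++ treePath (fun m => χ (pre ++ m)) L)
        ((ys ++ pre) ++ L) ≤ N pre := by
      have h := single_path_le_shS F (fun m => χ (pre ++ m)) (xs ++ treePath χ pre) (ys ++ pre) L
      rw [hLlen] at h
      exact h
    have h2 : (xs ++ treePath χ pre) ++ treePath (fun m => χ (pre ++ m)) L
        = xs ++ treePath χ (pre ++ L) := by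
      rw [treePath_append, List.append_assoc]
    have h3 : (ys ++ pre) ++ L = ys ++ (pre ++ L) := List.append_assoc _ _ _
    rw [h2, h3, h0] at h1
    have h4 := hP (treePath χ (pre ++ L)) (pre ++ L)
      (by simp only [treePath_length, List.length_append, hLlen]; omega)
      (by simp only [List.length_append, hLlen]; omega)
    exact h4 (le_antisymm h1 zero_le)
  have hNsum : ∀ pre : List Y, pre.length < r → ∑ y : Y, N (pre ++ [y]) = N pre := by
    intro pre hpre
    have harith : r - pre.length = (r - (pre.length + 1)) + 1 := by omega
    simp only [hN]
    rw [harith, shS_succ]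
    refine Finset.sum_congr rfl fun y _ => ?_
    simp [treePath_concat, List.append_assoc, harith]
  set n : List Y → ℝ := fun pre => (N pre).toReal with hn
  have hnpos : ∀ pre : List Y, pre.length ≤ r → 0 < n pre := fun pre h =>
    ENNReal.toReal_pos (hNpos pre h) (hNfin pre)
  have hnsum : ∀ pre : List Y, pre.length < r → ∑ y : Y, n (pre ++ [y]) = n pre := by
    intro pre h
    simp only [hn]
    rw [← ENNReal.toReal_sum (fun y _ => hNfin _), hNsum pre h]
  set π : List Y → Simplex Y := fun pre =>
    if h : 0 < ∑ y : Y, n (pre ++ [y]) then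
      ⟨fun y => n (pre ++ [y]) / ∑ z : Y, n (pre ++ [z]),
        fun y => div_nonneg ENNReal.toReal_nonneg (le_of_lt h),
        by rw [← Finset.sum_div, div_self (ne_of_gt h)]⟩
    else unifSimplex Y with hπ
  have hπval : ∀ pre : List Y, pre.length < r → ∀ y, (π pre).1 y = n (pre ++ [y]) / n pre := by
    intro pre h y
    have hpos : 0 < ∑ z : Y, n (pre ++ [z]) := by
      rw [hnsum pre h]; exact hnpos pre h.le
    simp only [hπ]
    rw [dif_pos hpos]
    show n (pre ++ [y]) / ∑ z : Y, n (pre ++ [z]) = _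
    rw [hnsum pre h]
  have hlogN : ∀ q : List Y, q.length ≤ r → ENNReal.log (N q) = ((Real.log (n q) : ℝ) : EReal) :=
    fun q hq => ENNReal.log_pos_real (hNpos q hq) (hNfin q)
  have hlossval : ∀ (q : List Y), q.length < r → ∀ a : Y,
      logloss (π q) a = ((Real.log (n q) - Real.log (n (q ++ [a])) : ℝ) : EReal) := by
    intro q hq a
    have hq1 : (q ++ [a]).length ≤ r := by
      simp only [List.length_append, List.length_singleton]; omega
    show negLog ((π q).1 a) = _
    rw [hπval q hq a, negLog,
      if_neg (not_le.2 (div_pos (hnpos _ hq1) (hnpos _ hq.le)))]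
    congr 1
    rw [Real.log_div (hnpos _ hq1).ne' (hnpos _ hq.le).ne']
    ring
  have hCcoe : ∀ pre : List Y, pre.length ≤ r →
      (∑ s ∈ Finset.range pre.length, logloss (π (pre.take s)) (pre.getD s default))
        = (((∑ s ∈ Finset.range pre.length,
            (Real.log (n (pre.take s)) - Real.log (n (pre.take (s + 1))))) : ℝ) : EReal) := by
    intro pre hpre
    rw [ereal_coe_sum]
    refine Finset.sum_congr rfl fun s hs => ?_
    have hs' := Finset.mem_range.1 hs
    have htake : pre.take s ++ [pre.getD s default] = pre.take (s + 1) := by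
      rw [List.getD_eq_getElem pre default hs']
      exact List.take_concat_get' pre s hs'
    have hlt : (pre.take s).length < r := by
      rw [List.length_take]
      omega
    rw [hlossval (pre.take s) hlt _, htake]
  set g : List Y → EReal := fun suf =>
    (∑ s ∈ Finset.range r, logloss (π (suf.take s)) (suf.getD s default)) -
      ⨅ f : F, cumLoss (f : Expert X Y) (xs ++ treePath χ suf) (ys ++ suf) with hg
  have main : ∀ (k : ℕ) (pre : List Y), pre.length + k = r →
      (∑ s ∈ Finset.range pre.length, logloss (π (pre.take s)) (pre.getD s default))
        + ENNReal.log (N pre) ≤ expTree π g k pre := by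
    intro k
    induction k with
    | zero =>
        intro pre hlen
        rw [Nat.add_zero] at hlen
        show _ ≤ g pre
        simp only [hg]
        rw [iInf_cumLoss_eq, sub_eq_add_neg, neg_neg]
        apply le_of_eq
        congr 1
        · rw [hlen]
        · simp only [hN]
          rw [hlen, Nat.sub_self, shS_zero]
    | succ k ih =>
        intro pre hlen
        have hm : pre.length < r := by omega
        rw [expTree_succ']
        have hny : ∀ y : Y, (pre ++ [y]).length ≤ r := by
          intro y; simp only [List.length_append, List.length_singleton]; omega
        set cr : ℝ := ∑ s ∈ Finset.range pre.length,
          (Real.log (n (pre.take s)) - Real.log (n (pre.take (s + 1)))) with hcr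
        calc (∑ s ∈ Finset.range pre.length, logloss (π (pre.take s)) (pre.getD s default))
              + ENNReal.log (N pre)
            = ((cr + Real.log (n pre) : ℝ) : EReal) := by
              rw [hCcoe pre hm.le, hlogN pre hm.le, ← EReal.coe_add]
          _ = (((∑ y : Y, (n (pre ++ [y]) / n pre) *
                ((cr + (Real.log (n pre) - Real.log (n (pre ++ [y]))))
                  + Real.log (n (pre ++ [y])))) : ℝ) : EReal) := by
              congr 1
              have hid : ∀ y : Y, (n (pre ++ [y]) / n pre) *
                  ((cr + (Real.log (n pre) - Real.log (n (pre ++ [y]))))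
                    + Real.log (n (pre ++ [y])))
                  = (n (pre ++ [y]) / n pre) * (cr + Real.log (n pre)) := fun y => by ring
              rw [Finset.sum_congr rfl fun y _ => hid y, ← Finset.sum_mul, ← Finset.sum_div,
                hnsum pre hm, div_self (hnpos pre hm.le).ne', one_mul]
          _ = ∑ y : Y, ((π pre).1 y : EReal) *
                (((cr + (Real.log (n pre) - Real.log (n (pre ++ [y]))))
                  + Real.log (n (pre ++ [y])) : ℝ) : EReal) := by
              rw [ereal_coe_sum]
              refine Finset.sum_congr rfl fun y _ => ?_
              rw [hπval pre hm y, ← EReal.coe_mul]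
          _ ≤ ∑ y : Y, ((π pre).1 y : EReal) * expTree π g k (pre ++ [y]) := by
              refine Finset.sum_le_sum fun y _ => ?_
              refine ereal_coe_mul_le_coe_mul ((π pre).2.1 y) ?_
              refine le_trans (le_of_eq ?_) (ih (pre ++ [y])
                (by simp only [List.length_append, List.length_singleton]; omega))
              rw [loss_sum_concat, hCcoe pre hm.le, hlossval pre hm y, hlogN (pre ++ [y]) (hny y),
                ← EReal.coe_add, ← EReal.coe_add]
  have h0 := main r [] (by simp)
  rw [dualValToGo]
  refine le_iSup_of_le χ (le_iSup_of_le π ?_)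
  refine le_trans (le_of_eq ?_) h0
  simp only [List.length_nil, Finset.range_zero, Finset.sum_empty, zero_add, hN,
    treePath_nil, List.append_nil, Nat.sub_zero]
  rfl

end Aux


/-- For every nonempty class `F`, every `t ∈ {0,…,T}` and all prefixes
`x_{1:t}`, `y_{1:t}`, the value-to-go dominates the dual value-to-go:
`G(F, x_{1:t}, y_{1:t}) ≥ W(F, x_{1:t}, y_{1:t})`.  Moreover, if every continuation has
`inf_{f ∈ F} Σ_{s=1}^T ℓ(f(x_{1:s}, y_{1:s-1}), y_s) < ∞`, then
`G(F, x_{1:t}, y_{1:t}) = W(F, x_{1:t}, y_{1:t})`. -/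
theorem dualValToGo_le_valToGo_and_eq
    {X Y : Type*} [Fintype Y] [Inhabited Y] [Nonempty X]
    (F : Set (Expert X Y)) (hF : F.Nonempty) (T t : ℕ) (ht : t ≤ T)
    (xs : List X) (ys : List Y) (hxs : xs.length = t) (hys : ys.length = t) :
    dualValToGo F (T - t) xs ys ≤ valToGo F (T - t) xs ys 0 ∧
    ((∀ (xs' : List X) (ys' : List Y), xs'.length = T - t → ys'.length = T - t →
        (⨅ f : F, cumLoss (f : Expert X Y) (xs ++ xs') (ys ++ ys')) < ⊤) →
      valToGo F (T - t) xs ys 0 = dualValToGo F (T - t) xs ys) := by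
  set r := T - t with hr
  have part1 : dualValToGo F r xs ys ≤ valToGo F r xs ys 0 := by
    refine le_trans (dual_le_iSup_log F r xs ys) (iSup_le fun χ => ?_)
    have h := log_shS_le_valToGo F r xs ys 0 χ
    rwa [zero_add] at h
  refine ⟨part1, fun h => ?_⟩
  have hP : ∀ (xs' : List X) (ys' : List Y), xs'.length = r → ys'.length = r →
      zsup F (xs ++ xs') (ys ++ ys') ≠ 0 := by
    intro xs' ys' h1 h2 hz
    have hlt := h xs' ys' h1 h2
    rw [iInf_cumLoss_eq, hz, ENNReal.log_zero, EReal.neg_bot] at hlt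
    exact lt_irrefl _ hlt
  refine le_antisymm ?_ part1
  have h1 := valToGo_le_log F r xs ys hP 0
  rw [zero_add] at h1
  refine le_trans h1 ?_
  rw [← ENNReal.logOrderIso_apply, OrderIso.map_iSup]
  refine iSup_le fun χ => ?_
  simpa using log_le_dual F r xs ys hP χ
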